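/- Let m > 0 and ε > 0. Define d : ℝ² → ℝ³ by d(k₁, k₂) = (−k₁, −k₂, m − ε(k₁² + k₂²)), which never vanishes, and set e = d/‖d‖ : ℝ² → ℝ³ (taking values in the unit sphere). Then the function (k₁, k₂) ↦ e(k₁, k₂) · ( ∂_{k₁}e(k₁, k₂) × ∂_{k₂}e(k₁, k₂) ) is integrable on ℝ² and ∫_{ℝ²} e · (∂_{k₁}e × ∂_{k₂}e) dk₁ dk₂ = 4π; equivalently, the Chern number C₊ = (1/4π) ∫_{ℝ²} e · (∂₁e × ∂₂e) of the upper band of the massive regularized Dirac Hamiltonian equals 1 = (sign(m) + sign(ε))/2. -/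

import Mathlib

open Matrix MeasureTheory Set

private lemma stmt19_radial (m ε : ℝ) (hm : 0 < m) (hε : 0 < ε) :
    IntegrableOn (fun r : ℝ => r * ((m + ε * r ^ 2) *
      ((Real.sqrt (r ^ 2 + (m - ε * r ^ 2) ^ 2))⁻¹) ^ 3)) (Ioi 0) ∧
    ∫ r in Ioi (0:ℝ), r * ((m + ε * r ^ 2) *
      ((Real.sqrt (r ^ 2 + (m - ε * r ^ 2) ^ 2))⁻¹) ^ 3) = 2 := by
  set P : ℝ → ℝ := fun r => r ^ 2 + (m - ε * r ^ 2) ^ 2 with hP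
  have hPpos : ∀ r : ℝ, 0 < P r := by
    intro r
    rcases eq_or_ne r 0 with h | h
    · simp only [hP, h]; norm_num; positivity
    · show 0 < r ^ 2 + (m - ε * r ^ 2) ^ 2
      positivity
  set G : ℝ → ℝ := fun r => (ε * r ^ 2 - m) * (Real.sqrt (P r))⁻¹ with hG
  have hwpos : ∀ r, 0 < Real.sqrt (P r) := fun r => Real.sqrt_pos.2 (hPpos r)
  have hderiv : ∀ r : ℝ, HasDerivAt G
      (r * ((m + ε * r ^ 2) * ((Real.sqrt (P r))⁻¹) ^ 3)) r := by
    intro r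
    have hq : HasDerivAt P (2 * r + 2 * (m - ε * r ^ 2) * (-(ε * (2 * r)))) r := by
      have h1 : HasDerivAt (fun t : ℝ => t ^ 2) (2 * r) r := by
        simpa using hasDerivAt_pow 2 r
      have h2 : HasDerivAt (fun t : ℝ => m - ε * t ^ 2) (-(ε * (2 * r))) r :=
        (h1.const_mul ε).const_sub m
      have h3 : HasDerivAt (fun t : ℝ => (m - ε * t ^ 2) ^ 2)
          (2 * (m - ε * r ^ 2) * (-(ε * (2 * r)))) r := by
        simpa using h2.fun_pow 2
      simpa [hP] using h1.fun_add h3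
    have hsqrt : HasDerivAt (fun t => Real.sqrt (P t))
        (1 / (2 * Real.sqrt (P r)) * (2 * r + 2 * (m - ε * r ^ 2) * (-(ε * (2 * r))))) r :=
      (Real.hasDerivAt_sqrt (hPpos r).ne').comp r hq
    have hinv : HasDerivAt (fun t => (Real.sqrt (P t))⁻¹)
        (-(1 / (2 * Real.sqrt (P r)) * (2 * r + 2 * (m - ε * r ^ 2) * (-(ε * (2 * r)))))
          / (Real.sqrt (P r)) ^ 2) r := hsqrt.inv (hwpos r).ne'
    have hmul : HasDerivAt G
        ((ε * (2 * r)) * (Real.sqrt (P r))⁻¹ + (ε * r ^ 2 - m) *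
          (-(1 / (2 * Real.sqrt (P r)) * (2 * r + 2 * (m - ε * r ^ 2) * (-(ε * (2 * r)))))
            / (Real.sqrt (P r)) ^ 2)) r := by
      have hl : HasDerivAt (fun t : ℝ => ε * t ^ 2 - m) (ε * (2 * r)) r := by
        have h1 : HasDerivAt (fun t : ℝ => t ^ 2) (2 * r) r := by
          simpa using hasDerivAt_pow 2 r
        exact (h1.const_mul ε).sub_const m
      exact hl.mul hinv
    convert hmul using 1
    have hw2 : (Real.sqrt (P r)) ^ 2 = P r := Real.sq_sqrt (hPpos r).le
    have hwne : Real.sqrt (P r) ≠ 0 := (hwpos r).ne'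
    have hPne : P r ≠ 0 := (hPpos r).ne'
    have hPd : P r = r ^ 2 + (m - ε * r ^ 2) ^ 2 := rfl
    field_simp
    linear_combination (-2 * r * ε) * hw2 + (-2 * r * ε) * hPd
  have hnonneg : ∀ r ∈ Ioi (0:ℝ), 0 ≤ r * ((m + ε * r ^ 2) * ((Real.sqrt (P r))⁻¹) ^ 3) := by
    intro r hr
    have hr0 : 0 < r := hr
    have := hwpos r
    positivity
  have htend : Filter.Tendsto G Filter.atTop (nhds 1) := by
    have hH : ContinuousAt (fun t : ℝ => (ε - m * t) * (Real.sqrt (t + (m * t - ε) ^ 2))⁻¹) 0 := by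
      have h1 : ContinuousAt (fun t : ℝ => (Real.sqrt (t + (m * t - ε) ^ 2))⁻¹) 0 := by
        have hc : ContinuousAt (fun t : ℝ => t + (m * t - ε) ^ 2) 0 := by fun_prop
        have h0 : Real.sqrt ((0:ℝ) + (m * 0 - ε) ^ 2) ≠ 0 := by
          simp only [mul_zero, zero_sub, zero_add, neg_sq]
          rw [Real.sqrt_sq hε.le]; exact hε.ne'
        exact ((Real.continuous_sqrt.continuousAt).comp hc).inv₀ h0
      exact ((by fun_prop : Continuous fun t : ℝ => ε - m * t).continuousAt).mul h1
    have hlim : Filter.Tendsto (fun r : ℝ => (r ^ 2)⁻¹) Filter.atTop (nhds 0) := by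
      exact Filter.Tendsto.comp tendsto_inv_atTop_zero (Filter.tendsto_pow_atTop two_ne_zero)
    have comp := (hH.tendsto.comp hlim)
    have hval : (ε - m * 0) * (Real.sqrt (0 + (m * 0 - ε) ^ 2))⁻¹ = 1 := by
      simp only [mul_zero, sub_zero, zero_sub, zero_add, neg_sq]
      rw [Real.sqrt_sq hε.le]; field_simp
    rw [hval] at comp
    refine comp.congr' ?_
    filter_upwards [Filter.eventually_gt_atTop (0:ℝ)] with r hr
    have hr2 : (0:ℝ) < r ^ 2 := by positivity
    have key : Real.sqrt ((r ^ 2)⁻¹ + (m * (r ^ 2)⁻¹ - ε) ^ 2) = Real.sqrt (P r) / r ^ 2 := by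
      rw [show ((r ^ 2)⁻¹ + (m * (r ^ 2)⁻¹ - ε) ^ 2) = P r / (r ^ 2) ^ 2 by
        show _ = (r ^ 2 + (m - ε * r ^ 2) ^ 2) / (r ^ 2) ^ 2
        field_simp]
      rw [Real.sqrt_div (hPpos r).le, Real.sqrt_sq hr2.le]
    simp only [Function.comp_apply]
    rw [key]
    show (ε - m * (r ^ 2)⁻¹) * (Real.sqrt (P r) / r ^ 2)⁻¹ = (ε * r ^ 2 - m) * (Real.sqrt (P r))⁻¹
    have hwne := (hwpos r).ne'
    field_simp
  have hcont : ContinuousWithinAt G (Ici 0) 0 := by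
    have h2 : ContinuousAt (fun r => (Real.sqrt (P r))⁻¹) 0 := by
      have h1 : ContinuousAt P 0 := by fun_prop
      exact ((Real.continuous_sqrt.continuousAt).comp h1).inv₀ (hwpos 0).ne'
    exact (((by fun_prop : Continuous fun r : ℝ => ε * r ^ 2 - m).continuousAt).mul
      h2).continuousWithinAt
  have key := integral_Ioi_of_hasDerivAt_of_nonneg hcont (fun x _ => hderiv x) hnonneg htend
  have keyInt := integrableOn_Ioi_deriv_of_nonneg hcont (fun x _ => hderiv x) hnonneg htend
  have hG0 : G 0 = -1 := by
    show (ε * 0 ^ 2 - m) * (Real.sqrt (P 0))⁻¹ = -1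
    rw [show P 0 = m ^ 2 by show (0:ℝ)^2 + (m - ε * 0 ^ 2) ^ 2 = m ^ 2; ring]
    rw [Real.sqrt_sq hm.le]
    field_simp
    ring
  refine ⟨?_, ?_⟩
  · have : (fun r : ℝ => r * ((m + ε * r ^ 2) * ((Real.sqrt (r ^ 2 + (m - ε * r ^ 2) ^ 2))⁻¹) ^ 3))
        = fun r => r * ((m + ε * r ^ 2) * ((Real.sqrt (P r))⁻¹) ^ 3) := rfl
    rw [this]; exact keyInt
  · rw [show (∫ r in Ioi (0:ℝ), r * ((m + ε * r ^ 2) *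
        ((Real.sqrt (r ^ 2 + (m - ε * r ^ 2) ^ 2))⁻¹) ^ 3))
        = ∫ r in Ioi (0:ℝ), r * ((m + ε * r ^ 2) * ((Real.sqrt (P r))⁻¹) ^ 3) from rfl]
    rw [key, hG0]; norm_num

private lemma stmt19_fval (m ε : ℝ) (hm : 0 < m) (hε : 0 < ε)
    (d : ℝ × ℝ → Fin 3 → ℝ)
    (hd : d = fun k => ![-k.1, -k.2, m - ε * (k.1 ^ 2 + k.2 ^ 2)])
    (e : ℝ × ℝ → Fin 3 → ℝ)
    (he : e = fun k => (Real.sqrt (d k ⬝ᵥ d k))⁻¹ • d k)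
    (f : ℝ × ℝ → ℝ)
    (hf : f = fun k => e k ⬝ᵥ crossProduct (fderiv ℝ e k (1, 0)) (fderiv ℝ e k (0, 1)))
    (k : ℝ × ℝ) :
    f k = (m + ε * (k.1 ^ 2 + k.2 ^ 2)) *
      ((Real.sqrt (k.1 ^ 2 + k.2 ^ 2 + (m - ε * (k.1 ^ 2 + k.2 ^ 2)) ^ 2))⁻¹) ^ 3 := by
  set Q : ℝ × ℝ → ℝ := fun p => p.1 ^ 2 + p.2 ^ 2 + (m - ε * (p.1 ^ 2 + p.2 ^ 2)) ^ 2 with hQ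
  have hQpos : ∀ p : ℝ × ℝ, 0 < Q p := by
    intro p
    rcases eq_or_ne p.1 0 with h1 | h1
    · rcases eq_or_ne p.2 0 with h2 | h2
      · show 0 < p.1 ^ 2 + p.2 ^ 2 + (m - ε * (p.1 ^ 2 + p.2 ^ 2)) ^ 2
        rw [h1, h2]; norm_num; positivity
      · show 0 < p.1 ^ 2 + p.2 ^ 2 + (m - ε * (p.1 ^ 2 + p.2 ^ 2)) ^ 2
        positivity
    · show 0 < p.1 ^ 2 + p.2 ^ 2 + (m - ε * (p.1 ^ 2 + p.2 ^ 2)) ^ 2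
      positivity
  have hwpos : ∀ p, 0 < Real.sqrt (Q p) := fun p => Real.sqrt_pos.2 (hQpos p)
  have hdot : ∀ p : ℝ × ℝ, d p ⬝ᵥ d p = Q p := by
    intro p
    simp [hd, dotProduct, Fin.sum_univ_three]
    show _ = p.1 ^ 2 + p.2 ^ 2 + (m - ε * (p.1 ^ 2 + p.2 ^ 2)) ^ 2
    ring
  have he2 : e = fun p => (Real.sqrt (Q p))⁻¹ • d p := by
    rw [he]; funext p; rw [hdot]
  have hQdiff : Differentiable ℝ Q := by
    rw [hQ]; fun_prop
  have hsdiff : ∀ p, DifferentiableAt ℝ (fun q => (Real.sqrt (Q q))⁻¹) p := by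
    intro p
    exact (((Real.hasDerivAt_sqrt (hQpos p).ne').differentiableAt).comp p (hQdiff p)).inv
      (hwpos p).ne'
  have hddiff : ∀ p, DifferentiableAt ℝ d p := by
    intro p
    rw [hd]
    apply differentiableAt_pi.mpr
    intro i
    fin_cases i <;> simp <;> fun_prop
  have hediff : ∀ p, DifferentiableAt ℝ e p := by
    intro p
    rw [he2]
    exact (hsdiff p).smul (hddiff p)
  set w : ℝ := Real.sqrt (Q k) with hw
  set M : ℝ := m - ε * (k.1 ^ 2 + k.2 ^ 2) with hM
  have hQ1 : HasDerivAt (fun t : ℝ => Q (t, k.2))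
      (2 * k.1 + 2 * M * (-(ε * (2 * k.1)))) k.1 := by
    have h1 : HasDerivAt (fun t : ℝ => t ^ 2 + k.2 ^ 2) (2 * k.1) k.1 := by
      simpa using (hasDerivAt_pow 2 k.1).add_const (k.2 ^ 2)
    have h2 : HasDerivAt (fun t : ℝ => m - ε * (t ^ 2 + k.2 ^ 2)) (-(ε * (2 * k.1))) k.1 :=
      (h1.const_mul ε).const_sub m
    have h3 : HasDerivAt (fun t : ℝ => (m - ε * (t ^ 2 + k.2 ^ 2)) ^ 2)
        (2 * M * (-(ε * (2 * k.1)))) k.1 := by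
      simpa [hM] using h2.fun_pow 2
    exact h1.add h3
  have hS1 : HasDerivAt (fun t : ℝ => (Real.sqrt (Q (t, k.2)))⁻¹)
      (-(1 / (2 * w) * (2 * k.1 + 2 * M * (-(ε * (2 * k.1))))) / w ^ 2) k.1 := by
    have hsq : HasDerivAt (fun t : ℝ => Real.sqrt (Q (t, k.2)))
        (1 / (2 * w) * (2 * k.1 + 2 * M * (-(ε * (2 * k.1))))) k.1 :=
      (Real.hasDerivAt_sqrt (hQpos k).ne').comp k.1 hQ1
    exact hsq.inv (hwpos k).ne'
  set s1 : ℝ := -(1 / (2 * w) * (2 * k.1 + 2 * M * (-(ε * (2 * k.1))))) / w ^ 2 with hs1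
  have hV1 : fderiv ℝ e k (1, 0) =
      ![s1 * (-k.1) + w⁻¹ * (-1), s1 * (-k.2) + w⁻¹ * 0,
        s1 * M + w⁻¹ * (-(ε * (2 * k.1)))] := by
    have hγ : HasDerivAt (fun t : ℝ => ((t, k.2) : ℝ × ℝ)) ((1 : ℝ), (0 : ℝ)) k.1 :=
      (hasDerivAt_id k.1).prodMk (hasDerivAt_const k.1 k.2)
    have h1 : HasDerivAt (fun t : ℝ => e (t, k.2)) (fderiv ℝ e k (1, 0)) k.1 :=
      (hediff k).hasFDerivAt.comp_hasDerivAt k.1 hγ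
    have he0 : (fun t : ℝ => e (t, k.2) 0) = fun t => (Real.sqrt (Q (t, k.2)))⁻¹ * (-t) := by
      funext t; simp [he2, hd]
    have he1 : (fun t : ℝ => e (t, k.2) 1) = fun t => (Real.sqrt (Q (t, k.2)))⁻¹ * (-k.2) := by
      funext t; simp [he2, hd]
    have he3 : (fun t : ℝ => e (t, k.2) 2)
        = fun t => (Real.sqrt (Q (t, k.2)))⁻¹ * (m - ε * (t ^ 2 + k.2 ^ 2)) := by
      funext t; simp [he2, hd]
    have hc0 : HasDerivAt (fun t : ℝ => e (t, k.2) 0) (s1 * (-k.1) + w⁻¹ * (-1)) k.1 := by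
      rw [he0]; exact hS1.mul ((hasDerivAt_id k.1).neg)
    have hc1 : HasDerivAt (fun t : ℝ => e (t, k.2) 1) (s1 * (-k.2) + w⁻¹ * 0) k.1 := by
      rw [he1]; exact hS1.mul (hasDerivAt_const k.1 (-k.2))
    have hc2 : HasDerivAt (fun t : ℝ => e (t, k.2) 2)
        (s1 * M + w⁻¹ * (-(ε * (2 * k.1)))) k.1 := by
      rw [he3]
      have hmid : HasDerivAt (fun t : ℝ => m - ε * (t ^ 2 + k.2 ^ 2)) (-(ε * (2 * k.1))) k.1 := by
        have h1 : HasDerivAt (fun t : ℝ => t ^ 2 + k.2 ^ 2) (2 * k.1) k.1 := by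
          simpa using (hasDerivAt_pow 2 k.1).add_const (k.2 ^ 2)
        exact (h1.const_mul ε).const_sub m
      exact hS1.mul hmid
    have h2 : HasDerivAt (fun t : ℝ => e (t, k.2))
        ![s1 * (-k.1) + w⁻¹ * (-1), s1 * (-k.2) + w⁻¹ * 0,
          s1 * M + w⁻¹ * (-(ε * (2 * k.1)))] k.1 := by
      apply hasDerivAt_pi.mpr
      intro i
      fin_cases i
      · exact hc0
      · exact hc1
      · exact hc2
    exact h1.unique h2
  have hQ2 : HasDerivAt (fun t : ℝ => Q (k.1, t))
      (2 * k.2 + 2 * M * (-(ε * (2 * k.2)))) k.2 := by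
    have h1 : HasDerivAt (fun t : ℝ => k.1 ^ 2 + t ^ 2) (2 * k.2) k.2 := by
      simpa using (hasDerivAt_pow 2 k.2).const_add (k.1 ^ 2)
    have h2 : HasDerivAt (fun t : ℝ => m - ε * (k.1 ^ 2 + t ^ 2)) (-(ε * (2 * k.2))) k.2 :=
      (h1.const_mul ε).const_sub m
    have h3 : HasDerivAt (fun t : ℝ => (m - ε * (k.1 ^ 2 + t ^ 2)) ^ 2)
        (2 * M * (-(ε * (2 * k.2)))) k.2 := by
      simpa [hM] using h2.fun_pow 2
    exact h1.add h3
  have hS2 : HasDerivAt (fun t : ℝ => (Real.sqrt (Q (k.1, t)))⁻¹)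
      (-(1 / (2 * w) * (2 * k.2 + 2 * M * (-(ε * (2 * k.2))))) / w ^ 2) k.2 := by
    have hsq : HasDerivAt (fun t : ℝ => Real.sqrt (Q (k.1, t)))
        (1 / (2 * w) * (2 * k.2 + 2 * M * (-(ε * (2 * k.2))))) k.2 :=
      (Real.hasDerivAt_sqrt (hQpos k).ne').comp k.2 hQ2
    exact hsq.inv (hwpos k).ne'
  set s2 : ℝ := -(1 / (2 * w) * (2 * k.2 + 2 * M * (-(ε * (2 * k.2))))) / w ^ 2 with hs2
  have hV2 : fderiv ℝ e k (0, 1) =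
      ![s2 * (-k.1) + w⁻¹ * 0, s2 * (-k.2) + w⁻¹ * (-1),
        s2 * M + w⁻¹ * (-(ε * (2 * k.2)))] := by
    have hγ : HasDerivAt (fun t : ℝ => ((k.1, t) : ℝ × ℝ)) ((0 : ℝ), (1 : ℝ)) k.2 :=
      (hasDerivAt_const k.2 k.1).prodMk (hasDerivAt_id k.2)
    have h1 : HasDerivAt (fun t : ℝ => e (k.1, t)) (fderiv ℝ e k (0, 1)) k.2 :=
      (hediff k).hasFDerivAt.comp_hasDerivAt k.2 hγ
    have he0 : (fun t : ℝ => e (k.1, t) 0) = fun t => (Real.sqrt (Q (k.1, t)))⁻¹ * (-k.1) := by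
      funext t; simp [he2, hd]
    have he1 : (fun t : ℝ => e (k.1, t) 1) = fun t => (Real.sqrt (Q (k.1, t)))⁻¹ * (-t) := by
      funext t; simp [he2, hd]
    have he3 : (fun t : ℝ => e (k.1, t) 2)
        = fun t => (Real.sqrt (Q (k.1, t)))⁻¹ * (m - ε * (k.1 ^ 2 + t ^ 2)) := by
      funext t; simp [he2, hd]
    have hc0 : HasDerivAt (fun t : ℝ => e (k.1, t) 0) (s2 * (-k.1) + w⁻¹ * 0) k.2 := by
      rw [he0]; exact hS2.mul (hasDerivAt_const k.2 (-k.1))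
    have hc1 : HasDerivAt (fun t : ℝ => e (k.1, t) 1) (s2 * (-k.2) + w⁻¹ * (-1)) k.2 := by
      rw [he1]; exact hS2.mul ((hasDerivAt_id k.2).neg)
    have hc2 : HasDerivAt (fun t : ℝ => e (k.1, t) 2)
        (s2 * M + w⁻¹ * (-(ε * (2 * k.2)))) k.2 := by
      rw [he3]
      have hmid : HasDerivAt (fun t : ℝ => m - ε * (k.1 ^ 2 + t ^ 2)) (-(ε * (2 * k.2))) k.2 := by
        have h1 : HasDerivAt (fun t : ℝ => k.1 ^ 2 + t ^ 2) (2 * k.2) k.2 := by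
          simpa using (hasDerivAt_pow 2 k.2).const_add (k.1 ^ 2)
        exact (h1.const_mul ε).const_sub m
      exact hS2.mul hmid
    have h2 : HasDerivAt (fun t : ℝ => e (k.1, t))
        ![s2 * (-k.1) + w⁻¹ * 0, s2 * (-k.2) + w⁻¹ * (-1),
          s2 * M + w⁻¹ * (-(ε * (2 * k.2)))] k.2 := by
      apply hasDerivAt_pi.mpr
      intro i
      fin_cases i
      · exact hc0
      · exact hc1
      · exact hc2
    exact h1.unique h2
  have hek : e k = ![w⁻¹ * (-k.1), w⁻¹ * (-k.2), w⁻¹ * M] := by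
    funext i
    fin_cases i <;> simp [he2, hd, hM, ← hw] <;> ring
  rw [hf]
  show e k ⬝ᵥ crossProduct (fderiv ℝ e k (1, 0)) (fderiv ℝ e k (0, 1)) = _
  rw [hV1, hV2, hek, cross_apply]
  simp only [dotProduct, Fin.sum_univ_three, Matrix.cons_val_zero, Matrix.cons_val_one,
    Matrix.head_cons, Matrix.cons_val_two, Matrix.tail_cons]
  rw [hs1, hs2, hM]
  ring

/-- The Chern number of the upper band of the massive regularized Dirac Hamiltonian:
`(1/4π) ∫_{ℝ²} e · (∂₁e × ∂₂e) = 1 = (sign m + sign ε)/2` for `m, ε > 0`. -/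
theorem stmt19 (m ε : ℝ) (hm : 0 < m) (hε : 0 < ε)
    (d : ℝ × ℝ → Fin 3 → ℝ)
    (hd : d = fun k => ![-k.1, -k.2, m - ε * (k.1 ^ 2 + k.2 ^ 2)])
    (e : ℝ × ℝ → Fin 3 → ℝ)
    (he : e = fun k => (Real.sqrt (d k ⬝ᵥ d k))⁻¹ • d k)
    (f : ℝ × ℝ → ℝ)
    (hf : f = fun k => e k ⬝ᵥ crossProduct (fderiv ℝ e k (1, 0)) (fderiv ℝ e k (0, 1))) :
    (∀ k : ℝ × ℝ, d k ≠ 0) ∧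
    Integrable f ∧
    (∫ k : ℝ × ℝ, f k) = 4 * Real.pi ∧
    (1 / (4 * Real.pi)) * (∫ k : ℝ × ℝ, f k) = (Real.sign m + Real.sign ε) / 2 := by
  have hfk := stmt19_fval m ε hm hε d hd e he f hf
  -- the nonvanishing of d
  have hdne : ∀ k : ℝ × ℝ, d k ≠ 0 := by
    intro k hk
    have h2 : d k 2 = 0 := by rw [hk]; rfl
    have h0 : d k 0 = 0 := by rw [hk]; rfl
    have h1 : d k 1 = 0 := by rw [hk]; rfl
    rw [hd] at h0 h1 h2
    simp at h0 h1 h2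
    rw [h0, h1] at h2
    norm_num at h2
    nlinarith
  -- the radial integrand
  set F : ℝ → ℝ := fun r => r * ((m + ε * r ^ 2) *
      ((Real.sqrt (r ^ 2 + (m - ε * r ^ 2) ^ 2))⁻¹) ^ 3) with hF
  obtain ⟨hFint, hFval⟩ := stmt19_radial m ε hm hε
  -- polar coordinates
  have hpolar : ∀ p : ℝ × ℝ, p.1 • f (polarCoord.symm p) = F p.1 := by
    intro p
    have hsymm : polarCoord.symm p = (p.1 * Real.cos p.2, p.1 * Real.sin p.2) := rfl
    rw [hfk (polarCoord.symm p), hsymm]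
    have hsq : (p.1 * Real.cos p.2) ^ 2 + (p.1 * Real.sin p.2) ^ 2 = p.1 ^ 2 := by
      have := Real.sin_sq_add_cos_sq p.2
      linear_combination p.1 ^ 2 * this
    show p.1 * _ = F p.1
    rw [hF]
    simp only [hsq]
  have htarget : polarCoord.target = Ioi (0:ℝ) ×ˢ Ioo (-Real.pi) Real.pi := rfl
  have hIoo : IntegrableOn (fun _ : ℝ => (1:ℝ)) (Ioo (-Real.pi) Real.pi) := by
    apply (integrableOn_const_iff (C := (1:ℝ)) (by simp)).2
    right
    exact measure_Ioo_lt_top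
  have hIoo2 : ∫ _ in Ioo (-Real.pi) Real.pi, (1:ℝ) = 2 * Real.pi := by
    rw [setIntegral_const]
    rw [Real.volume_real_Ioo_of_le (by linarith [Real.pi_pos])]
    simp; ring
  -- value of the integral
  have hprodint : ∫ p in polarCoord.target, F p.1 = 4 * Real.pi := by
    rw [htarget]
    have h1 : ∫ p in Ioi (0:ℝ) ×ˢ Ioo (-Real.pi) Real.pi, F p.1
        = ∫ p in Ioi (0:ℝ) ×ˢ Ioo (-Real.pi) Real.pi, F p.1 * (fun _ : ℝ => (1:ℝ)) p.2 := by
      simp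
    rw [h1, Measure.volume_eq_prod, ← Measure.prod_restrict]
    rw [integral_prod_mul F (fun _ : ℝ => (1:ℝ))]
    rw [hFval, hIoo2]
    ring
  have hIval : (∫ k : ℝ × ℝ, f k) = 4 * Real.pi := by
    rw [← integral_comp_polarCoord_symm f]
    rw [← hprodint]
    apply setIntegral_congr_fun polarCoord.open_target.measurableSet
    intro p _
    exact hpolar p
  -- integrability
  have hInt : Integrable f := by
    set B : ℝ × ℝ → ℝ × ℝ →L[ℝ] ℝ × ℝ := fun p =>
      LinearMap.toContinuousLinearMap (Matrix.toLin (Module.Basis.finTwoProd ℝ) (Module.Basis.finTwoProd ℝ)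
        !![Real.cos p.2, -p.1 * Real.sin p.2; Real.sin p.2, p.1 * Real.cos p.2]) with hB
    have B_det : ∀ p, (B p).det = p.1 := by
      intro p
      conv_rhs => rw [← one_mul p.1, ← Real.cos_sq_add_sin_sq p.2]
      simp only [hB, neg_mul, LinearMap.det_toContinuousLinearMap, LinearMap.det_toLin,
        Matrix.det_fin_two_of, sub_neg_eq_add]
      ring
    have hinj : InjOn polarCoord.symm polarCoord.target := by
      have := polarCoord.symm.injOn
      rwa [polarCoord.symm_source] at this
    have hder : ∀ p ∈ polarCoord.target,
        HasFDerivWithinAt polarCoord.symm (B p) polarCoord.target p := fun p _ =>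
      (hasFDerivAt_polarCoord_symm p).hasFDerivWithinAt
    have hIntT : IntegrableOn (fun p : ℝ × ℝ => |(B p).det| • f (polarCoord.symm p))
        polarCoord.target := by
      have h1 : IntegrableOn (fun p : ℝ × ℝ => F p.1 * (fun _ : ℝ => (1:ℝ)) p.2)
          (Ioi (0:ℝ) ×ˢ Ioo (-Real.pi) Real.pi) := by
        rw [IntegrableOn, Measure.volume_eq_prod, ← Measure.prod_restrict]
        exact hFint.mul_prod hIoo
      rw [htarget]
      apply h1.congr_fun _ (measurableSet_Ioi.prod measurableSet_Ioo)
      intro p hp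
      have hp1 : 0 < p.1 := hp.1
      show F p.1 * (fun _ : ℝ => (1:ℝ)) p.2 = |(B p).det| • f (polarCoord.symm p)
      rw [B_det, abs_of_pos hp1, hpolar p]
      simp
    have himg := (integrableOn_image_iff_integrableOn_abs_det_fderiv_smul volume
      polarCoord.open_target.measurableSet hder hinj f).2 hIntT
    rw [polarCoord.symm_image_target_eq_source] at himg
    have hres : volume.restrict polarCoord.source = volume := by
      rw [Measure.restrict_congr_set polarCoord_source_ae_eq_univ, Measure.restrict_univ]
    rw [IntegrableOn, hres] at himg
    exact himg
  refine ⟨hdne, hInt, hIval, ?_⟩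
  rw [hIval, Real.sign_of_pos hm, Real.sign_of_pos hε]
  have hpi := Real.pi_ne_zero
  field_simp
  norm_num
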